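/- Let E be a separable complex Hilbert space and suppose Φ, Φ₁, Ψ, Ψ₁ ∈ L∞_{B(E)}(𝕋) satisfy T_Φ + H_Ψ = T_{Φ₁} + H_{Ψ₁} as operators on H²_E(𝕋). Then Φ = Φ₁ almost everywhere on 𝕋, and Ψ − Ψ₁ ∈ conj(z H∞_{B(E)}(𝔻)), i.e. all Fourier coefficients of Ψ − Ψ₁ of nonnegative index vanish. -/

import Mathlib

open MeasureTheory Complex AddCircle
open scoped ENNReal Real

set_option synthInstance.maxHeartbeats 1000000
set_option linter.unusedSectionVars false

noncomputable section

namespace PaperTHV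

instance fact2pi : Fact (0 < 2 * Real.pi) := ⟨by positivity⟩

/-- The circle, as `ℝ / 2πℤ`. -/
abbrev 𝕋c := AddCircle (2 * Real.pi)

/-- The normalized Lebesgue (Haar) measure on the circle. -/
abbrev μc : Measure 𝕋c := haarAddCircle

/-- The `n`-th Fourier coefficient of a vector-valued function on the circle
(a universe-polymorphic version of `fourierCoeff`). -/
def vFourierCoeff {F : Type*} [NormedAddCommGroup F] [NormedSpace ℂ F]
    (f : 𝕋c → F) (n : ℤ) : F :=
  ∫ t : 𝕋c, fourier (-n) t • f t ∂μc

variable (E : Type*) [NormedAddCommGroup E] [InnerProductSpace ℂ E] [CompleteSpace E]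
  [SecondCountableTopology E]

instance : IsBoundedSMul (E →L[ℂ] E) E :=
  IsBoundedSMul.of_norm_smul_le fun r x => r.le_opNorm x

/-- `L²_E(𝕋)`, the Bochner space of square integrable `E`-valued functions. -/
abbrev L2v := Lp E 2 μc

variable {E}

theorem integrable_fourier_smul (f : L2v E) (n : ℤ) :
    Integrable (fun t : 𝕋c => fourier n t • (f : 𝕋c → E) t) μc := by
  have h1 : MemLp (f : 𝕋c → E) 1 μc :=
    (Lp.memLp f).mono_exponent (by norm_num)
  have h2 : MemLp (fun t : 𝕋c => (fourier n t : ℂ)) ∞ μc :=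
    memLp_top_of_bound ((fourier n).continuous.aestronglyMeasurable) 1
      (Filter.Eventually.of_forall fun x => by
        simp only [fourier_apply, Circle.norm_coe, le_refl])
  have h3 := h1.smul (r := 1) h2
  rw [memLp_one_iff_integrable] at h3
  exact h3.congr (Filter.Eventually.of_forall fun x => rfl)

theorem vFourierCoeff_lp_add (f g : L2v E) (n : ℤ) :
    vFourierCoeff (⇑(f + g)) n = vFourierCoeff (⇑f) n + vFourierCoeff (⇑g) n := by
  unfold vFourierCoeff
  rw [← integral_add (integrable_fourier_smul f (-n)) (integrable_fourier_smul g (-n))]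
  apply integral_congr_ae
  filter_upwards [Lp.coeFn_add f g] with x hx
  rw [hx]
  simp only [Pi.add_apply, smul_add]

theorem vFourierCoeff_lp_smul (c : ℂ) (f : L2v E) (n : ℤ) :
    vFourierCoeff (⇑(c • f)) n = c • vFourierCoeff (⇑f) n := by
  unfold vFourierCoeff
  rw [← integral_smul]
  apply integral_congr_ae
  filter_upwards [Lp.coeFn_smul c f] with x hx
  rw [hx]
  simp only [Pi.smul_apply]
  rw [smul_comm]

theorem vFourierCoeff_lp_zero (n : ℤ) : vFourierCoeff (⇑(0 : L2v E)) n = 0 := by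
  unfold vFourierCoeff
  have h : (fun t : 𝕋c => fourier (-n) t • (⇑(0 : L2v E)) t) =ᵐ[μc] (fun _ => (0 : E)) := by
    filter_upwards [Lp.coeFn_zero E 2 μc] with x hx
    simp [hx]
  rw [integral_congr_ae h, integral_zero]

variable (E) in
/-- The `E`-valued Hardy space `H²_E(𝕋)`: members of `L²_E(𝕋)` all of whose Fourier
coefficients of negative index vanish. -/
def HardyV : Submodule ℂ (L2v E) where
  carrier := {f | ∀ n : ℤ, n < 0 → vFourierCoeff (⇑f) n = 0}
  add_mem' := by
    intro f g hf hg n hn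
    rw [vFourierCoeff_lp_add, hf n hn, hg n hn, add_zero]
  zero_mem' := fun n _ => vFourierCoeff_lp_zero n
  smul_mem' := by
    intro c f hf n hn
    rw [vFourierCoeff_lp_smul, hf n hn, smul_zero]

theorem norm_vFourierCoeff_le (f : L2v E) (n : ℤ) : ‖vFourierCoeff (⇑f) n‖ ≤ ‖f‖ := by
  unfold vFourierCoeff
  have h1 : ‖∫ t, fourier (-n) t • (⇑f) t ∂μc‖ ≤ ∫ t, ‖fourier (-n) t • (⇑f) t‖ ∂μc :=
    norm_integral_le_integral_norm _
  have h2 : (∫ t, ‖fourier (-n) t • (⇑f) t‖ ∂μc) = ∫ t, ‖(⇑f) t‖ ∂μc := by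
    apply integral_congr_ae
    apply Filter.Eventually.of_forall
    intro x
    simp only [norm_smul, fourier_apply, Circle.norm_coe, one_mul]
  refine h1.trans (h2.le.trans ?_)
  have h3 : (∫ t, ‖(⇑f) t‖ ∂μc) = (eLpNorm (⇑f) 1 μc).toReal := by
    rw [integral_norm_eq_lintegral_enorm (Lp.aestronglyMeasurable f),
      eLpNorm_one_eq_lintegral_enorm]
  rw [h3, Lp.norm_def]
  apply ENNReal.toReal_mono (Lp.eLpNorm_ne_top f)
  exact eLpNorm_le_eLpNorm_of_exponent_le (by norm_num) (Lp.aestronglyMeasurable f)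

theorem continuous_fourierCoeff (n : ℤ) :
    Continuous fun f : L2v E => vFourierCoeff (⇑f) n := by
  have hL : LipschitzWith 1 (fun f : L2v E => vFourierCoeff (⇑f) n) := by
    apply LipschitzWith.of_dist_le_mul
    intro f g
    rw [dist_eq_norm, dist_eq_norm]
    have hsub : vFourierCoeff (⇑(f - g)) n = vFourierCoeff (⇑f) n - vFourierCoeff (⇑g) n := by
      have h1 : f - g = f + (-1 : ℂ) • g := by rw [neg_one_smul, sub_eq_add_neg]
      rw [h1, vFourierCoeff_lp_add, vFourierCoeff_lp_smul, neg_one_smul, sub_eq_add_neg]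
    rw [← hsub]
    simpa using norm_vFourierCoeff_le (f - g) n
  exact hL.continuous

theorem isClosed_HardyV : IsClosed ((HardyV E : Submodule ℂ (L2v E)) : Set (L2v E)) := by
  have h : ((HardyV E : Submodule ℂ (L2v E)) : Set (L2v E)) =
      ⋂ (n : ℤ) (_ : n < 0), ((fun f : L2v E => vFourierCoeff (⇑f) n) ⁻¹' {0}) := by
    ext f
    simp only [Set.mem_iInter, Set.mem_preimage, Set.mem_singleton_iff, SetLike.mem_coe]
    exact ⟨fun hf n hn => hf n hn, fun hf n hn => hf n hn⟩
  rw [h]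
  exact isClosed_iInter fun n => isClosed_iInter fun _ =>
    isClosed_singleton.preimage (continuous_fourierCoeff n)

instance : CompleteSpace (HardyV E) := (isClosed_HardyV (E := E)).completeSpace_coe

/-- Underlying function of the multiplication operator with operator-valued symbol. -/
def MopFunV (Φ : 𝕋c → (E →L[ℂ] E)) (hΦ : MemLp Φ ∞ μc) (f : L2v E) : L2v E :=
  ((Lp.memLp f).smul (r := 2) hΦ).toLp (Φ • ⇑f)

theorem MopFunV_coeFn (Φ : 𝕋c → (E →L[ℂ] E)) (hΦ : MemLp Φ ∞ μc) (f : L2v E) :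
    ⇑(MopFunV Φ hΦ f) =ᵐ[μc] Φ • ⇑f := MemLp.coeFn_toLp _

theorem MopFunV_add (Φ : 𝕋c → (E →L[ℂ] E)) (hΦ : MemLp Φ ∞ μc) (f g : L2v E) :
    MopFunV Φ hΦ (f + g) = MopFunV Φ hΦ f + MopFunV Φ hΦ g := by
  apply Lp.ext
  filter_upwards [MopFunV_coeFn Φ hΦ (f + g), MopFunV_coeFn Φ hΦ f, MopFunV_coeFn Φ hΦ g,
    Lp.coeFn_add f g, Lp.coeFn_add (MopFunV Φ hΦ f) (MopFunV Φ hΦ g)] with x h1 h2 h3 h4 h5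
  simp only [h1, h5, Pi.add_apply, h2, h3, Pi.smul_apply', h4, smul_add]

theorem MopFunV_smul (Φ : 𝕋c → (E →L[ℂ] E)) (hΦ : MemLp Φ ∞ μc) (c : ℂ) (f : L2v E) :
    MopFunV Φ hΦ (c • f) = c • MopFunV Φ hΦ f := by
  apply Lp.ext
  filter_upwards [MopFunV_coeFn Φ hΦ (c • f), MopFunV_coeFn Φ hΦ f,
    Lp.coeFn_smul c f, Lp.coeFn_smul c (MopFunV Φ hΦ f)] with x h1 h2 h3 h4
  simp only [h1, h4, Pi.smul_apply', Pi.smul_apply, h2, h3]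
  rw [smul_comm]

theorem MopFunV_norm (Φ : 𝕋c → (E →L[ℂ] E)) (hΦ : MemLp Φ ∞ μc) (f : L2v E) :
    ‖MopFunV Φ hΦ f‖ ≤ (eLpNorm Φ ∞ μc).toReal * ‖f‖ := by
  have hrfl : MopFunV Φ hΦ f = ((Lp.memLp f).smul (r := 2) hΦ).toLp (Φ • ⇑f) := rfl
  rw [hrfl, Lp.norm_toLp (Φ • ⇑f) ((Lp.memLp f).smul (r := 2) hΦ), Lp.norm_def]
  have hb : eLpNorm (Φ • ⇑f) 2 μc ≤ eLpNorm Φ ∞ μc * eLpNorm (⇑f) 2 μc :=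
    eLpNorm_smul_le_eLpNorm_top_mul_eLpNorm 2 (Lp.aestronglyMeasurable f) Φ
  have hfin : eLpNorm Φ ∞ μc * eLpNorm (⇑f) 2 μc ≠ ∞ :=
    ENNReal.mul_ne_top hΦ.eLpNorm_ne_top (Lp.eLpNorm_ne_top f)
  calc (eLpNorm (Φ • ⇑f) 2 μc).toReal
      ≤ (eLpNorm Φ ∞ μc * eLpNorm (⇑f) 2 μc).toReal := ENNReal.toReal_mono hfin hb
    _ = (eLpNorm Φ ∞ μc).toReal * (eLpNorm (⇑f) 2 μc).toReal := ENNReal.toReal_mul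

/-- The multiplication (Laurent) operator `M_Φ` on `L²_E(𝕋)` with operator-valued symbol
`Φ ∈ L∞_{B(E)}(𝕋)`. -/
def MopV (Φ : 𝕋c → (E →L[ℂ] E)) (hΦ : MemLp Φ ∞ μc) : L2v E →L[ℂ] L2v E :=
  LinearMap.mkContinuous
    { toFun := MopFunV Φ hΦ
      map_add' := MopFunV_add Φ hΦ
      map_smul' := MopFunV_smul Φ hΦ }
    (eLpNorm Φ ∞ μc).toReal
    (fun f => MopFunV_norm Φ hΦ f)

/-- The conjugation operator `J : L²_E(𝕋) → L²_E(𝕋)`, `(Jf)(z) = f(z̄)`. -/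
def JopV : L2v E →L[ℂ] L2v E :=
  LinearMap.mkContinuous
    { toFun := fun f =>
        Lp.compMeasurePreserving (fun x : 𝕋c => -x) (Measure.measurePreserving_neg μc) f
      map_add' := by
        intro f g
        exact map_add (Lp.compMeasurePreserving _ (Measure.measurePreserving_neg μc)) f g
      map_smul' := by
        intro c f
        apply Lp.ext
        simp only [RingHom.id_apply]
        have hmp := Measure.measurePreserving_neg (μ := μc)
        have h1 := Lp.coeFn_compMeasurePreserving (μ := μc) (c • f) hmp
        have h2 := Lp.coeFn_compMeasurePreserving (μ := μc) f hmp
        have h3 : ⇑(c • f) ∘ (fun x : 𝕋c => -x) =ᵐ[μc] (c • ⇑f) ∘ (fun x : 𝕋c => -x) :=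
          hmp.quasiMeasurePreserving.ae_eq_comp (Lp.coeFn_smul c f)
        have h4 : (c • ⇑f) ∘ (fun x : 𝕋c => -x) = c • (⇑f ∘ fun x : 𝕋c => -x) := rfl
        have h5 : c • (⇑f ∘ fun x : 𝕋c => -x) =ᵐ[μc]
            c • ⇑(Lp.compMeasurePreserving (fun x : 𝕋c => -x) hmp f) :=
          h2.symm.const_smul c
        exact ((h1.trans h3).trans ((h4 ▸ h5 : _))).trans (Lp.coeFn_smul c _).symm }
    1
    (by
      intro f
      simp only [LinearMap.coe_mk, AddHom.coe_mk, one_mul]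
      exact le_of_eq (Lp.norm_compMeasurePreserving f _))

/-- The Toeplitz operator `T_Φ = P_{H²_E} M_Φ |_{H²_E}`. -/
def ToepV (Φ : 𝕋c → (E →L[ℂ] E)) (hΦ : MemLp Φ ∞ μc) : HardyV E →L[ℂ] HardyV E :=
  (HardyV E).orthogonalProjectionOnto.comp ((MopV Φ hΦ).comp (HardyV E).subtypeL)

/-- The Hankel operator `H_Φ = P_{H²_E} M_Φ J |_{H²_E}`. -/
def HankV (Φ : 𝕋c → (E →L[ℂ] E)) (hΦ : MemLp Φ ∞ μc) : HardyV E →L[ℂ] HardyV E :=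
  (HardyV E).orthogonalProjectionOnto.comp ((MopV Φ hΦ).comp (JopV.comp (HardyV E).subtypeL))

variable (E) in
/-- The symbol `z ⬝ I_E`. -/
def zSym : 𝕋c → (E →L[ℂ] E) := fun x => (fourier 1 x : ℂ) • (1 : E →L[ℂ] E)

theorem zSym_memℒp : MemLp (zSym E) ∞ μc := by
  have hc : Continuous (zSym E) := by
    have h1 : Continuous fun x : 𝕋c => (fourier 1 x : ℂ) := (fourier 1).continuous
    exact h1.smul continuous_const
  refine memLp_top_of_bound hc.aestronglyMeasurable 1
    (Filter.Eventually.of_forall fun x => ?_)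
  rw [zSym, norm_smul]
  simp only [fourier_apply, Circle.norm_coe, one_mul]
  exact ContinuousLinearMap.norm_id_le

variable (E) in
/-- The (vector-valued) unilateral shift `T_z`. -/
def TzV : HardyV E →L[ℂ] HardyV E := ToepV (zSym E) zSym_memℒp

variable (E) in
/-- `T_z^*`, the adjoint of the unilateral shift. -/
def TzStarV : HardyV E →L[ℂ] HardyV E := ContinuousLinearMap.adjoint (TzV E)

variable (E) in
/-- `A` is a Toeplitz + Hankel operator: `A = T_Φ + H_Ψ` for some
`Φ, Ψ ∈ L∞_{B(E)}(𝕋)`. -/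
def IsToepPlusHankV (A : HardyV E →L[ℂ] HardyV E) : Prop :=
  ∃ (Φ Ψ : 𝕋c → (E →L[ℂ] E)) (hΦ : MemLp Φ ∞ μc) (hΨ : MemLp Ψ ∞ μc),
    A = ToepV Φ hΦ + HankV Ψ hΨ


section AuxUniqueness

local notation "⟪" x ", " y "⟫" => @inner ℂ _ _ x y

theorem fourier_apply_neg' (n : ℤ) (x : 𝕋c) : (fourier n (-x) : ℂ) = fourier (-n) x := by
  rw [fourier_apply, smul_neg, fourier_neg', ← fourier_neg]

theorem integral_fourier (k : ℤ) :
    (∫ t : 𝕋c, (fourier k t : ℂ) ∂μc) = if k = 0 then 1 else 0 := by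
  split_ifs with hk
  · subst hk
    simp [fourier_zero]
  · have horth := orthonormal_fourier (T := 2 * Real.pi)
    have h2 : ⟪(fourierLp 2 (0 : ℤ) : Lp ℂ 2 μc), fourierLp 2 k⟫ = 0 :=
      horth.2 (fun hh => hk hh.symm)
    rw [MeasureTheory.L2.inner_def] at h2
    rw [← h2]
    apply integral_congr_ae
    filter_upwards [coeFn_fourierLp (T := 2 * Real.pi) 2 (0 : ℤ),
      coeFn_fourierLp (T := 2 * Real.pi) 2 k] with t h0 hkk
    rw [h0, hkk]
    simp [RCLike.inner_apply, fourier_zero]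

theorem memLp_op_apply_ (Θ : 𝕋c → (E →L[ℂ] E)) (hΘ : MemLp Θ ∞ μc) (v : E) :
    MemLp (fun t => Θ t v) 2 μc := by
  have h := (memLp_const (p := 2) (μ := μc) v).smul (r := 2) hΘ
  exact h.ae_eq (Filter.Eventually.of_forall fun t => rfl)

theorem integrable_fourier_smul' {F : Type*} [NormedAddCommGroup F] [NormedSpace ℂ F]
    {f : 𝕋c → F} (hf : MemLp f 2 μc) (k : ℤ) :
    Integrable (fun t : 𝕋c => fourier k t • f t) μc := by
  have h1 : MemLp f 1 μc := hf.mono_exponent (by norm_num)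
  have h2 : MemLp (fun t : 𝕋c => (fourier k t : ℂ)) ∞ μc :=
    memLp_top_of_bound ((fourier k).continuous.aestronglyMeasurable) 1
      (Filter.Eventually.of_forall fun x => by
        simp only [fourier_apply, Circle.norm_coe, le_refl])
  have h3 := h1.smul (r := 1) h2
  rw [memLp_one_iff_integrable] at h3
  exact h3.congr (Filter.Eventually.of_forall fun x => rfl)

/-- The `k`-th Fourier coefficient of `t ↦ Θ t v`. -/
def cc (Θ : 𝕋c → (E →L[ℂ] E)) (k : ℤ) (v : E) : E :=
  ∫ t : 𝕋c, fourier (-k) t • (Θ t v) ∂μc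

theorem integrable_cc (Θ : 𝕋c → (E →L[ℂ] E)) (hΘ : MemLp Θ ∞ μc) (k : ℤ) (v : E) :
    Integrable (fun t : 𝕋c => fourier k t • (Θ t v)) μc :=
  integrable_fourier_smul' (memLp_op_apply_ Θ hΘ v) k

theorem cc_sub (Θ Θ₁ : 𝕋c → (E →L[ℂ] E)) (hΘ : MemLp Θ ∞ μc) (hΘ₁ : MemLp Θ₁ ∞ μc)
    (k : ℤ) (v : E) :
    cc Θ k v - cc Θ₁ k v = ∫ t : 𝕋c, fourier (-k) t • (Θ t v - Θ₁ t v) ∂μc := by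
  rw [cc, cc, ← integral_sub (integrable_cc Θ hΘ (-k) v) (integrable_cc Θ₁ hΘ₁ (-k) v)]
  congr 1
  funext t
  rw [smul_sub]

/-- The monomial `t ↦ fourier n t • v` is in `L²`. -/
theorem eMem (n : ℤ) (v : E) : MemLp (fun t : 𝕋c => fourier n t • v) 2 μc := by
  have h1 : Continuous fun x : 𝕋c => (fourier n x : ℂ) := (fourier n).continuous
  have hc : Continuous fun t : 𝕋c => fourier n t • v := h1.smul continuous_const
  refine (memLp_top_of_bound hc.aestronglyMeasurable ‖v‖
    (Filter.Eventually.of_forall fun x => ?_)).mono_exponent le_top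
  rw [norm_smul]
  simp only [fourier_apply, Circle.norm_coe, one_mul, le_refl]

/-- The monomial as an element of `L²`. -/
def eLp (n : ℤ) (v : E) : L2v E := (eMem n v).toLp _

theorem eLp_coe (n : ℤ) (v : E) :
    ⇑(eLp n v) =ᵐ[μc] fun t : 𝕋c => fourier n t • v := MemLp.coeFn_toLp _

theorem vFourierCoeff_eLp (n m : ℤ) (v : E) :
    vFourierCoeff (⇑(eLp n v)) m = if m = n then v else 0 := by
  unfold vFourierCoeff
  have h1 : (∫ t : 𝕋c, fourier (-m) t • (⇑(eLp n v)) t ∂μc)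
      = ∫ t : 𝕋c, (fourier (-m + n) t : ℂ) • v ∂μc := by
    apply integral_congr_ae
    filter_upwards [eLp_coe n v] with t ht
    rw [ht, smul_smul, ← fourier_add]
  rw [h1, integral_smul_const, integral_fourier]
  by_cases hmn : m = n
  · rw [if_pos (by omega), if_pos hmn, one_smul]
  · rw [if_neg (by omega), if_neg hmn, zero_smul]

theorem eLp_mem_hardy (n : ℤ) (hn : 0 ≤ n) (v : E) : eLp n v ∈ HardyV E := by
  intro m hm
  rw [vFourierCoeff_eLp, if_neg (by omega)]

/-- The monomial as an element of the Hardy space. -/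
def eH (n : ℤ) (hn : 0 ≤ n) (v : E) : HardyV E := ⟨eLp n v, eLp_mem_hardy n hn v⟩

theorem inner_eLp (m : ℤ) (v : E) (g : L2v E) :
    ⟪eLp m v, g⟫ = ⟪v, vFourierCoeff (⇑g) m⟫ := by
  rw [MeasureTheory.L2.inner_def]
  have h2 : ⟪v, vFourierCoeff (⇑g) m⟫
      = ∫ t : 𝕋c, ⟪v, fourier (-m) t • (⇑g) t⟫ ∂μc := by
    rw [vFourierCoeff, ← integral_inner (integrable_fourier_smul g (-m)) v]
  rw [h2]
  apply integral_congr_ae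
  filter_upwards [eLp_coe m v] with t ht
  rw [ht, inner_smul_left, inner_smul_right, ← fourier_neg]

theorem coeff_proj (g : L2v E) (m : ℤ) (hm : 0 ≤ m) :
    vFourierCoeff (⇑(((HardyV E).orthogonalProjectionOnto g : HardyV E) : L2v E)) m
      = vFourierCoeff (⇑g) m := by
  apply ext_inner_left ℂ
  intro v
  rw [← inner_eLp m v, ← inner_eLp m v]
  have horth : g - (((HardyV E).orthogonalProjectionOnto g : HardyV E) : L2v E) ∈ (HardyV E)ᗮ :=
    Submodule.sub_starProjection_mem_orthogonal (K := HardyV E) g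
  have h0 := (Submodule.mem_orthogonal _ _).1 horth (eLp m v) (eLp_mem_hardy m hm v)
  rw [inner_sub_right] at h0
  linear_combination (norm := module) -h0

theorem coeff_Mop (Θ : 𝕋c → (E →L[ℂ] E)) (hΘ : MemLp Θ ∞ μc) (n m : ℤ) (v : E) :
    vFourierCoeff (⇑(MopV Θ hΘ (eLp n v))) m = cc Θ (m - n) v := by
  have hM : MopV Θ hΘ (eLp n v) = MopFunV Θ hΘ (eLp n v) := rfl
  rw [hM]
  unfold vFourierCoeff cc
  apply integral_congr_ae
  filter_upwards [MopFunV_coeFn Θ hΘ (eLp n v), eLp_coe n v] with t h1 h2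
  rw [h1]
  simp only [Pi.smul_apply']
  rw [h2, ContinuousLinearMap.smul_def, (Θ t).map_smul, smul_smul, ← fourier_add,
    show -m + n = -(m - n) by ring]

theorem J_eLp (n : ℤ) (v : E) : (JopV (eLp n v) : L2v E) = eLp (-n) v := by
  have hJ : JopV (eLp n v)
      = Lp.compMeasurePreserving (fun x : 𝕋c => -x) (Measure.measurePreserving_neg μc)
          (eLp n v) := rfl
  rw [hJ]
  apply Lp.ext
  have hmp := Measure.measurePreserving_neg (μ := μc)
  filter_upwards [Lp.coeFn_compMeasurePreserving (eLp n v) hmp,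
    hmp.quasiMeasurePreserving.ae_eq_comp (eLp_coe n v), eLp_coe (-n) v] with t h1 h2 h3
  rw [h1, h2, h3]
  simp only [Function.comp_apply]
  rw [fourier_apply_neg']

theorem coeff_toep_hank (Θ Ψ' : 𝕋c → (E →L[ℂ] E)) (hΘ : MemLp Θ ∞ μc)
    (hΨ' : MemLp Ψ' ∞ μc) (n m : ℤ) (hn : 0 ≤ n) (hm : 0 ≤ m) (v : E) :
    vFourierCoeff (⇑(((ToepV Θ hΘ + HankV Ψ' hΨ') (eH n hn v) : HardyV E) : L2v E)) m
      = cc Θ (m - n) v + cc Ψ' (m + n) v := by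
  have hx : (((ToepV Θ hΘ + HankV Ψ' hΨ') (eH n hn v) : HardyV E) : L2v E)
      = ((ToepV Θ hΘ (eH n hn v) : HardyV E) : L2v E)
        + ((HankV Ψ' hΨ' (eH n hn v) : HardyV E) : L2v E) := rfl
  rw [hx, vFourierCoeff_lp_add]
  have hT : vFourierCoeff (⇑((ToepV Θ hΘ (eH n hn v) : HardyV E) : L2v E)) m
      = cc Θ (m - n) v := by
    have : (ToepV Θ hΘ (eH n hn v) : HardyV E)
        = (HardyV E).orthogonalProjectionOnto (MopV Θ hΘ (eLp n v)) := rfl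
    rw [this, coeff_proj _ m hm, coeff_Mop]
  have hH : vFourierCoeff (⇑((HankV Ψ' hΨ' (eH n hn v) : HardyV E) : L2v E)) m
      = cc Ψ' (m + n) v := by
    have : (HankV Ψ' hΨ' (eH n hn v) : HardyV E)
        = (HardyV E).orthogonalProjectionOnto (MopV Ψ' hΨ' (JopV (eLp n v))) := rfl
    rw [this, J_eLp, coeff_proj _ m hm, coeff_Mop, sub_neg_eq_add]
  rw [hT, hH]

theorem coeff_inner (Θ Θ₁ : 𝕋c → (E →L[ℂ] E)) (hΘ : MemLp Θ ∞ μc) (hΘ₁ : MemLp Θ₁ ∞ μc)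
    (k : ℤ) (v w : E) :
    fourierCoeff (fun t : 𝕋c => ⟪w, Θ t v - Θ₁ t v⟫) k = ⟪w, cc Θ k v - cc Θ₁ k v⟫ := by
  rw [cc_sub Θ Θ₁ hΘ hΘ₁]
  have hint : Integrable (fun t : 𝕋c => fourier (-k) t • (Θ t v - Θ₁ t v)) μc :=
    integrable_fourier_smul' ((memLp_op_apply_ Θ hΘ v).sub (memLp_op_apply_ Θ₁ hΘ₁ v)) (-k)
  rw [show (fourierCoeff (fun t : 𝕋c => ⟪w, Θ t v - Θ₁ t v⟫) k : ℂ)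
      = ∫ t : 𝕋c, fourier (-k) t • ⟪w, Θ t v - Θ₁ t v⟫ ∂μc from rfl,
    ← integral_inner hint w]
  apply integral_congr_ae
  apply Filter.Eventually.of_forall
  intro t
  simp only [inner_smul_right, smul_eq_mul]

end AuxUniqueness




/-- **Theorem (uniqueness of symbols of Toeplitz + Hankel operators).** If
`T_Φ + H_Ψ = T_{Φ₁} + H_{Ψ₁}` on `H²_E(𝕋)`, then `Φ = Φ₁` a.e. and all Fourier coefficients of
`Ψ - Ψ₁` of nonnegative index vanish (that is, `Ψ - Ψ₁ ∈ conj(z H∞_{B(E)}(𝔻))`). -/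
theorem toeplitz_plus_hankel_symbols_unique
    (Φ Φ₁ Ψ Ψ₁ : 𝕋c → (E →L[ℂ] E))
    (hΦ : MemLp Φ ∞ μc) (hΦ₁ : MemLp Φ₁ ∞ μc) (hΨ : MemLp Ψ ∞ μc) (hΨ₁ : MemLp Ψ₁ ∞ μc)
    (h : ToepV Φ hΦ + HankV Ψ hΨ = ToepV Φ₁ hΦ₁ + HankV Ψ₁ hΨ₁) :
    Φ =ᵐ[μc] Φ₁ ∧
      ∀ n : ℤ, 0 ≤ n → vFourierCoeff (fun x : 𝕋c => Ψ x - Ψ₁ x) n = 0 := by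
  classical
  have hqr : ∀ m n : ℤ, 0 ≤ m → 0 ≤ n → ∀ v : E,
      (cc Φ (m - n) v - cc Φ₁ (m - n) v) + (cc Ψ (m + n) v - cc Ψ₁ (m + n) v) = 0 := by
    intro m n hm hn v
    have h1 := DFunLike.congr_fun h (eH n hn v)
    have h2 : (((ToepV Φ hΦ + HankV Ψ hΨ) (eH n hn v) : HardyV E) : L2v E)
        = (((ToepV Φ₁ hΦ₁ + HankV Ψ₁ hΨ₁) (eH n hn v) : HardyV E) : L2v E) := by rw [h1]
    have h3 := congrArg (fun f : L2v E => vFourierCoeff (⇑f) m) h2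
    rw [coeff_toep_hank Φ Ψ hΦ hΨ n m hn hm v,
      coeff_toep_hank Φ₁ Ψ₁ hΦ₁ hΨ₁ n m hn hm v] at h3
    have h4 : (cc Φ (m - n) v - cc Φ₁ (m - n) v) + (cc Ψ (m + n) v - cc Ψ₁ (m + n) v)
        = (cc Φ (m - n) v + cc Ψ (m + n) v) - (cc Φ₁ (m - n) v + cc Ψ₁ (m + n) v) := by
      abel
    rw [h4, h3, sub_self]
  have hstep : ∀ (k : ℤ) (v : E),
      cc Φ k v - cc Φ₁ k v = cc Φ (k + 2) v - cc Φ₁ (k + 2) v := by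
    intro k v
    rcases le_or_gt 0 k with hk | hk
    · have h1 := hqr (k + 1) 1 (by omega) (by omega) v
      have h2 := hqr (k + 2) 0 (by omega) (by omega) v
      rw [show k + 1 - 1 = k by ring, show k + 1 + 1 = k + 2 by ring] at h1
      rw [show k + 2 - 0 = k + 2 by ring, show k + 2 + 0 = k + 2 by ring] at h2
      rw [eq_neg_of_add_eq_zero_left h1, eq_neg_of_add_eq_zero_left h2]
    · have h1 := hqr 0 (-k) le_rfl (by omega) v
      have h2 := hqr 1 (-k - 1) (by omega) (by omega) v
      rw [show (0 : ℤ) - -k = k by ring, show (0 : ℤ) + -k = -k by ring] at h1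
      rw [show (1 : ℤ) - (-k - 1) = k + 2 by ring, show (1 : ℤ) + (-k - 1) = -k by ring] at h2
      rw [eq_neg_of_add_eq_zero_left h1, eq_neg_of_add_eq_zero_left h2]
  have hper : ∀ (v : E) (k : ℤ) (j : ℕ),
      cc Φ (k + 2 * (j : ℤ)) v - cc Φ₁ (k + 2 * (j : ℤ)) v = cc Φ k v - cc Φ₁ k v := by
    intro v k j
    induction j with
    | zero => norm_num
    | succ i ih =>
      have he : (k + 2 * ((i + 1 : ℕ) : ℤ)) = (k + 2 * (i : ℤ)) + 2 := by push_cast; ring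
      rw [he, ← hstep (k + 2 * (i : ℤ)) v, ih]
  have hscalar : ∀ (v w : E) (k : ℤ),
      @inner ℂ _ _ w (cc Φ k v - cc Φ₁ k v) = 0 := by
    intro v w k
    have hmem2 : MemLp (fun t : 𝕋c => @inner ℂ _ _ w (Φ t v - Φ₁ t v)) 2 μc :=
      ((memLp_op_apply_ Φ hΦ v).sub (memLp_op_apply_ Φ₁ hΦ₁ v)).const_inner w
    have hrepr : ∀ i : ℤ, fourierBasis.repr (hmem2.toLp _) i
        = @inner ℂ _ _ w (cc Φ i v - cc Φ₁ i v) := by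
      intro i
      rw [fourierBasis_repr]
      have hcongr : fourierCoeff (⇑(hmem2.toLp _)) i
          = fourierCoeff (fun t : 𝕋c => @inner ℂ _ _ w (Φ t v - Φ₁ t v)) i := by
        apply integral_congr_ae
        filter_upwards [hmem2.coeFn_toLp] with t ht
        rw [ht]
      rw [hcongr, coeff_inner Φ Φ₁ hΦ hΦ₁ i v w]
    have hsum := (lp.memℓp (fourierBasis.repr (hmem2.toLp _))).summable
      (by norm_num : (0 : ℝ) < (2 : ℝ≥0∞).toReal)
    have htend0 := hsum.tendsto_cofinite_zero
    have hinj : Function.Injective (fun j : ℕ => k + 2 * (j : ℤ)) := by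
      intro a b hab
      simp only at hab
      omega
    have htend : Filter.Tendsto
        ((fun i : ℤ => ‖fourierBasis.repr (hmem2.toLp _) i‖ ^ (2 : ℝ≥0∞).toReal)
          ∘ fun j : ℕ => k + 2 * (j : ℤ)) Filter.atTop (nhds 0) :=
      htend0.comp (Nat.cofinite_eq_atTop ▸ hinj.tendsto_cofinite)
    have hconstfun : ((fun i : ℤ => ‖fourierBasis.repr (hmem2.toLp _) i‖ ^ (2 : ℝ≥0∞).toReal)
          ∘ fun j : ℕ => k + 2 * (j : ℤ))
        = fun _ : ℕ => ‖@inner ℂ _ _ w (cc Φ k v - cc Φ₁ k v)‖ ^ (2 : ℝ≥0∞).toReal := by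
      funext j
      simp only [Function.comp_apply]
      rw [hrepr, hper v k j]
    rw [hconstfun] at htend
    have hzero : ‖@inner ℂ _ _ w (cc Φ k v - cc Φ₁ k v)‖ ^ (2 : ℝ≥0∞).toReal = 0 :=
      tendsto_nhds_unique tendsto_const_nhds htend
    have h2 : ((2 : ℝ≥0∞).toReal : ℝ) ≠ 0 := by norm_num
    have := (Real.rpow_eq_zero (norm_nonneg _) h2).1 hzero
    exact norm_eq_zero.1 this
  have hq0 : ∀ (k : ℤ) (v : E), cc Φ k v - cc Φ₁ k v = 0 := by
    intro k v
    apply ext_inner_left ℂ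
    intro w
    rw [inner_zero_right, hscalar v w k]
  have hr0 : ∀ (m : ℤ), 0 ≤ m → ∀ v : E, cc Ψ m v - cc Ψ₁ m v = 0 := by
    intro m hm v
    have h1 := hqr m 0 hm le_rfl v
    rw [show m - 0 = m by ring, show m + 0 = m by ring] at h1
    rw [hq0 m v, zero_add] at h1
    exact h1
  constructor
  · -- Φ = Φ₁ a.e.
    obtain ⟨s, hsc, hsd⟩ := TopologicalSpace.exists_countable_dense E
    have hvw0 : ∀ v w : E,
        (fun t : 𝕋c => @inner ℂ _ _ w (Φ t v - Φ₁ t v)) =ᵐ[μc] (fun _ => (0 : ℂ)) := by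
      intro v w
      have hmem2 : MemLp (fun t : 𝕋c => @inner ℂ _ _ w (Φ t v - Φ₁ t v)) 2 μc :=
        ((memLp_op_apply_ Φ hΦ v).sub (memLp_op_apply_ Φ₁ hΦ₁ v)).const_inner w
      have hrepr : fourierBasis.repr (hmem2.toLp _) = 0 := by
        apply lp.ext
        funext i
        rw [fourierBasis_repr]
        have hcongr : fourierCoeff (⇑(hmem2.toLp _)) i
            = fourierCoeff (fun t : 𝕋c => @inner ℂ _ _ w (Φ t v - Φ₁ t v)) i := by
          apply integral_congr_ae
          filter_upwards [hmem2.coeFn_toLp] with t ht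
          rw [ht]
        rw [hcongr, coeff_inner Φ Φ₁ hΦ hΦ₁ i v w, hscalar v w i]
        rfl
      have hF0 : hmem2.toLp _ = 0 := by
        apply fourierBasis.repr.injective
        rw [hrepr, map_zero]
      have h0 : (fun t : 𝕋c => @inner ℂ _ _ w (Φ t v - Φ₁ t v))
          =ᵐ[μc] ⇑(0 : Lp ℂ 2 μc) := hF0 ▸ hmem2.coeFn_toLp.symm
      exact h0.trans (Lp.coeFn_zero ℂ 2 μc)
    have hae : ∀ᵐ t ∂μc, ∀ v ∈ s, ∀ w ∈ s, @inner ℂ _ _ w (Φ t v - Φ₁ t v) = 0 := by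
      rw [MeasureTheory.ae_ball_iff hsc]
      intro v hv
      rw [MeasureTheory.ae_ball_iff hsc]
      intro w hw
      exact (hvw0 v w).mono fun t ht => ht
    filter_upwards [hae] with t ht
    have hv : ∀ v ∈ s, Φ t v = Φ₁ t v := by
      intro v hv
      have hx : ∀ w : E, @inner ℂ _ _ w (Φ t v - Φ₁ t v) = 0 := by
        intro w
        have hcl : IsClosed {w : E | @inner ℂ _ _ w (Φ t v - Φ₁ t v) = (0 : ℂ)} :=
          isClosed_eq (Continuous.inner continuous_id continuous_const) continuous_const
        have hsub : closure s ⊆ {w : E | @inner ℂ _ _ w (Φ t v - Φ₁ t v) = (0 : ℂ)} :=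
          closure_minimal (fun w hw => ht v hv w hw) hcl
        exact hsub (hsd w)
      have h5 := hx (Φ t v - Φ₁ t v)
      rw [inner_self_eq_zero] at h5
      exact sub_eq_zero.1 h5
    have hcoe : ⇑(Φ t) = ⇑(Φ₁ t) := Continuous.ext_on hsd (Φ t).continuous (Φ₁ t).continuous hv
    exact ContinuousLinearMap.ext fun x => congrFun hcoe x
  · -- nonnegative Fourier coefficients of Ψ - Ψ₁ vanish
    intro n hn
    apply ContinuousLinearMap.ext
    intro v
    have hintop : Integrable (fun t : 𝕋c => fourier (-n) t • (Ψ t - Ψ₁ t)) μc :=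
      integrable_fourier_smul' ((hΨ.sub hΨ₁).mono_exponent le_top) (-n)
    have happ : (vFourierCoeff (fun x : 𝕋c => Ψ x - Ψ₁ x) n) v
        = ∫ t : 𝕋c, (fourier (-n) t • (Ψ t - Ψ₁ t)) v ∂μc := by
      rw [show vFourierCoeff (fun x : 𝕋c => Ψ x - Ψ₁ x) n
          = ∫ t : 𝕋c, fourier (-n) t • (Ψ t - Ψ₁ t) ∂μc from rfl]
      exact ContinuousLinearMap.integral_apply hintop v
    rw [ContinuousLinearMap.zero_apply, happ]
    have heq : (∫ t : 𝕋c, (fourier (-n) t • (Ψ t - Ψ₁ t)) v ∂μc)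
        = cc Ψ n v - cc Ψ₁ n v := by
      rw [cc_sub Ψ Ψ₁ hΨ hΨ₁]
      apply integral_congr_ae
      apply Filter.Eventually.of_forall
      intro t
      simp only [ContinuousLinearMap.coe_smul', Pi.smul_apply, ContinuousLinearMap.sub_apply]
    rw [heq]
    exact hr0 n hn v

end PaperTHV
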